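/- arXiv:1602.06451 — 2 statements merged into one kernel-verified Lean document; each statement's English description precedes it below -/
import Mathlib

section
/- Let $W$ be a Coxeter group, $\mathfrak{w} = s_1\cdots s_n$ a reduced word for $w$, $x \le w$, and $\lambda(\mathscr{C}^-_{x,\mathfrak{w}}) = (j_d,\ldots,j_1)$ (with $j_1 < \cdots < j_d$) the decreasing label of the unique maximal chain in $[x,w]$ with decreasing label. If $j_1 = 1$, then $x < s_1 x$. -/
open CoxeterSystem

variable {B W : Type*} [Group W] {M : CoxeterMatrix B}

/-- The Bruhat order on a Coxeter group. -/
def CoxeterSystem.bruhatLE (cs : CoxeterSystem M W) : W → W → Prop :=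
  Relation.ReflTransGen (fun a b => cs.length a < cs.length b ∧ ∃ t, cs.IsReflection t ∧ b = a * t)

/-- The strict Bruhat order. -/
def CoxeterSystem.bruhatLT (cs : CoxeterSystem M W) (x y : W) : Prop :=
  cs.bruhatLE x y ∧ x ≠ y

/-- Delete from the word `ω` the letters at the (0-based) positions in `S`. -/
def delIdxs {B : Type*} (ω : List B) (S : List ℕ) : List B :=
  (ω.zipIdx.filter (fun p => decide (p.2 ∉ S))).map Prod.fst

open Classical in
/-- `λ_{x,ω}`: the increasing list of (0-based) positions `i` such that
`x ≤ s_1 ⋯ ŝ_i ⋯ s_n` (the word with the letter at position `i` omitted). -/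
noncomputable def CoxeterSystem.lambdaList (cs : CoxeterSystem M W) (x : W) (ω : List B) :
    List ℕ :=
  (List.range ω.length).filter
    (fun i => decide (cs.bruhatLE x (cs.wordProd (ω.eraseIdx i))))

/-- `y` covers `x` in Bruhat order. -/
def CoxeterSystem.covers (cs : CoxeterSystem M W) (y x : W) : Prop :=
  cs.bruhatLT x y ∧ cs.length y = cs.length x + 1

/-- `L` is the label of a maximal chain `w = w_0 → w_1 → ⋯ → w_d = x` of the Bruhat interval
`[x, w]` with respect to the reduced word `ω` of `w`: `L` records the (0-based) positions
deleted at each covering step, `w_k` being obtained from `ω` by deleting the positions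
`L.take k`. -/
def CoxeterSystem.IsMaxChainLabel (cs : CoxeterSystem M W) (ω : List B) (x : W)
    (L : List ℕ) : Prop :=
  L.Nodup ∧ (∀ i ∈ L, i < ω.length) ∧
    (∀ k < L.length, cs.covers (cs.wordProd (delIdxs ω (L.take k)))
      (cs.wordProd (delIdxs ω (L.take (k + 1))))) ∧
    cs.wordProd (delIdxs ω L) = x

lemma delIdxs_cons_of_zero {B : Type*} (a : B) (t : List B) (S L : List ℕ)
    (h0S : 0 ∉ S) (h0L : 0 ∈ L)
    (h : ∀ i, i ≠ 0 → (i ∈ L ↔ i ∈ S)) : delIdxs (a :: t) S = a :: delIdxs (a :: t) L := by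
  unfold delIdxs
  rw [List.zipIdx_cons, List.filter_cons, List.filter_cons]
  have h0 : (decide ((a, 0).2 ∉ S)) = true := by simp [h0S]
  have h0' : (decide ((a, 0).2 ∉ L)) = false := by simp [h0L]
  rw [h0, h0']
  have : List.filter (fun p => decide (p.2 ∉ S)) (List.zipIdx t (0 + 1))
      = List.filter (fun p => decide (p.2 ∉ L)) (List.zipIdx t (0 + 1)) := by
    apply List.filter_congr
    intro p hp
    have h1 : 0 + 1 ≤ p.2 := List.le_snd_of_mem_zipIdx hp
    have := h p.2 (by omega)
    simp [this]
  rw [this]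
  simp

/-- Lemma 6.2 (iv), first part: let `L = λ(𝒞⁻_{x,ω}) = (j_d, …, j_1)` be the decreasing
(equivalently, lexicographically maximal) label of a maximal chain of `[x, w]` with respect to
the reduced word `ω` of `w`. If `j_1 = 1` (0-based: the last entry is `0`), then `x < s_1 x`. -/
theorem dec_chain_last_zero_lt (cs : CoxeterSystem M W) (ω : List B) (w x : W)
    (L : List ℕ) (hωne : ω ≠ [])
    (hred : cs.IsReduced ω) (hw : cs.wordProd ω = w) (hxw : cs.bruhatLE x w)
    (hL : cs.IsMaxChainLabel ω x L) (hsort : L.Pairwise (· > ·))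
    (hlexmax : ∀ L', cs.IsMaxChainLabel ω x L' → ¬ List.Lex (· < ·) L L')
    (hne : L ≠ []) (hlast : L.getLast hne = 0) :
    cs.bruhatLT x (cs.simple (ω.head hωne) * x) := by
  obtain ⟨hnd, hbound, hcov, hx⟩ := hL
  have hd : 0 < L.length := List.length_pos_iff.mpr hne
  have hc := hcov (L.length - 1) (by omega)
  rw [Nat.sub_add_cancel hd, List.take_length, ← List.dropLast_eq_take] at hc
  have hsplit : L.dropLast ++ [0] = L := by rw [← hlast]; exact List.dropLast_append_getLast hne
  have hpw : ∀ i ∈ L.dropLast, i > 0 := by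
    have := hsort
    rw [← hsplit, List.pairwise_append] at this
    intro i hi
    exact this.2.2 i hi 0 (List.mem_singleton_self 0)
  have h0S : 0 ∉ L.dropLast := fun h => lt_irrefl 0 (hpw 0 h)
  have h0L : 0 ∈ L := by rw [← hsplit]; simp
  have hmem : ∀ i, i ≠ 0 → (i ∈ L ↔ i ∈ L.dropLast) := by
    intro i hi
    rw [← hsplit]
    simp [hi]
  obtain ⟨a, t, hω⟩ : ∃ a t, ω = a :: t := by
    cases ω with
    | nil => exact absurd rfl hωne
    | cons a t => exact ⟨a, t, rfl⟩
  have key : delIdxs ω L.dropLast = (ω.head hωne) :: delIdxs ω L := by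
    subst hω
    exact delIdxs_cons_of_zero a t L.dropLast L h0S h0L hmem
  rw [key, cs.wordProd_cons, hx] at hc
  exact hc.1
end

section
/- Let $W$ be a Coxeter group, $\mathfrak{w} = s_1\cdots s_n$ a reduced word for $w$, and $x \le w$. Suppose $j_1 = 1$, where $(j_d, \ldots, j_1)$ is the decreasing label $\lambda(\mathscr{C}^-_{x,\mathfrak{w}})$. Then $x \le s_1 w$, and $\lambda_{x, s_1\mathfrak{w}} = (\lambda_{x,\mathfrak{w}} \setminus \{1\}) - 1$, i.e. for all $1 < t \le n$: $x \le s_1\cdots\hat{s}_t\cdots s_n$ if and only if $x \le s_2\cdots\hat{s}_t\cdots s_n$. -/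
open CoxeterSystem

variable {B W : Type*} [Group W] {M : CoxeterMatrix B}

set_option linter.unusedSectionVars false

section BruhatDevelopment

open List

namespace CoxeterSystem

variable (cs : CoxeterSystem M W)
local prefix:100 "ℓ" => cs.length
local prefix:100 "π" => cs.wordProd
local prefix:100 "σ" => cs.simple

/-! ### Basic properties of the Bruhat order -/

theorem bruhatLE_refl (w : W) : cs.bruhatLE w w := Relation.ReflTransGen.refl

theorem bruhatLE_trans {a b c : W} (h1 : cs.bruhatLE a b) (h2 : cs.bruhatLE b c) :
    cs.bruhatLE a c := Relation.ReflTransGen.trans h1 h2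

theorem bruhatLE_length_le {a b : W} (h : cs.bruhatLE a b) : ℓ a ≤ ℓ b := by
  induction h with
  | refl => exact le_refl _
  | tail _ h ih => exact ih.trans h.1.le

theorem bruhatLE_step {a t : W} (ht : cs.IsReflection t) (h : ℓ a < ℓ (a * t)) :
    cs.bruhatLE a (a * t) := Relation.ReflTransGen.single ⟨h, t, ht, rfl⟩

theorem le_simple_mul {i : B} {a : W} (h : ℓ a < ℓ (σ i * a)) : cs.bruhatLE a (σ i * a) := by
  have ht : cs.IsReflection (a⁻¹ * σ i * a) := by
    simpa using (cs.isReflection_simple i).conj a⁻¹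
  have key : σ i * a = a * (a⁻¹ * σ i * a) := by group
  rw [key]
  exact cs.bruhatLE_step ht (by rwa [← key])

theorem simple_mul_le {i : B} {a : W} (h : ℓ (σ i * a) < ℓ a) : cs.bruhatLE (σ i * a) a := by
  have := cs.le_simple_mul (a := σ i * a) (i := i)
  rw [simple_mul_simple_cancel_left] at this
  exact this h

/-! ### Alternating words and right inversion sequences of braid words -/

theorem drop_alternatingWord' (i i' : B) : ∀ (j l : ℕ), j ≤ l →
    (alternatingWord i i' l).drop j = alternatingWord i i' (l - j) := by
  intro j
  induction j with
  | zero => intro l _; simp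
  | succ j ih =>
    intro l hl
    obtain ⟨l', rfl⟩ : ∃ l', l = l' + 1 := ⟨l - 1, by omega⟩
    rw [alternatingWord_succ']
    have : (((if Even l' then i' else i)) :: alternatingWord i i' l').drop (j+1)
        = (alternatingWord i i' l').drop j := rfl
    rw [this, ih l' (by omega)]
    congr 1
    omega

theorem simple_mul_pow (i i' : B) (k : ℕ) :
    σ i' * (σ i * σ i') ^ k = ((σ i * σ i') ^ k)⁻¹ * σ i' := by
  induction k with
  | zero => simp
  | succ k ih =>
    have key : σ i' * (σ i * σ i') = (σ i * σ i')⁻¹ * σ i' := by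
      rw [mul_inv_rev, cs.inv_simple, cs.inv_simple, mul_assoc]
    have c1 : ((σ i * σ i')^k)⁻¹ * (σ i * σ i')⁻¹ = (σ i * σ i')⁻¹ * ((σ i * σ i')^k)⁻¹ := by
      rw [← mul_inv_rev, ← mul_inv_rev, ← pow_succ, ← pow_succ']
    rw [pow_succ, ← mul_assoc, ih, mul_assoc, key,
      show ((σ i * σ i')^k * (σ i * σ i'))⁻¹ = (σ i * σ i')⁻¹ * ((σ i * σ i')^k)⁻¹ from
        mul_inv_rev _ _, ← mul_assoc, c1]

theorem alt_aux' (i i' : B) (a : ℕ) :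
    (π (alternatingWord i i' a))⁻¹ * π (alternatingWord i i' (a+1))
      = ((σ i * σ i') ^ a)⁻¹ * σ i' := by
  rw [prod_alternatingWord_eq_mul_pow, prod_alternatingWord_eq_mul_pow]
  rcases Nat.even_or_odd a with h | h
  · have h2 : ¬ Even (a+1) := by simp [Nat.even_add_one, h]
    obtain ⟨c, rfl⟩ := h
    have e1 : (c + c)/2 = c := by omega
    have e2 : (c + c + 1)/2 = c := by omega
    simp only [if_pos (by exact ⟨c, rfl⟩ : Even (c+c)), if_neg h2, e1, e2, inv_one, one_mul,
      mul_one]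
    rw [cs.simple_mul_pow, ← mul_assoc, ← mul_inv_rev, ← pow_add]
  · have h2 : Even (a+1) := by simpa [Nat.even_add_one] using h
    obtain ⟨c, rfl⟩ : ∃ c, a = 2*c+1 := by obtain ⟨c, hc⟩ := h; exact ⟨c, by omega⟩
    have e1 : (2*c+1)/2 = c := by omega
    have e2 : (2*c+1+1)/2 = c + 1 := by omega
    simp only [if_neg (by simp [Nat.even_add_one, parity_simps] : ¬ Even (2*c+1)), if_pos h2,
      e1, e2, one_mul, mul_inv_rev, cs.inv_simple]
    have e3 : c+1+c = 2*c+1 := by omega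
    rw [mul_assoc, cs.simple_mul_pow, ← mul_assoc, ← mul_inv_rev, ← pow_add, e3]

theorem ris_alternatingWord (i i' : B) (m k : ℕ) (hk : k < 2*m) :
    (cs.rightInvSeq (alternatingWord i i' (2*m))).getD k 1
      = ((σ i * σ i') ^ (2*m - k - 1))⁻¹ * σ i' := by
  rw [getD_rightInvSeq]
  have hd1 : (alternatingWord i i' (2*m)).drop (k+1) = alternatingWord i i' (2*m - (k+1)) :=
    drop_alternatingWord' i i' (k+1) (2*m) (by omega)
  have hd0 : (alternatingWord i i' (2*m)).drop k = alternatingWord i i' (2*m - k) :=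
    drop_alternatingWord' i i' k (2*m) (by omega)
  have hsucc : 2*m - k = (2*m - k - 1) + 1 := by omega
  rw [hsucc, alternatingWord_succ'] at hd0
  have hget : (alternatingWord i i' (2*m))[k]?
      = some (if Even (2*m - k - 1) then i' else i) := by
    rw [← head?_drop, hd0]
    rfl
  rw [hget]
  have h1 : 2*m - (k+1) = 2*m - k - 1 := by omega
  rw [hd1, h1]
  simp only [Option.map_some, Option.getD_some]
  have : σ (if Even (2*m - k - 1) then i' else i) * π (alternatingWord i i' (2*m - k - 1))
      = π (alternatingWord i i' ((2*m - k - 1) + 1)) := by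
    rw [alternatingWord_succ', wordProd_cons]
  rw [mul_assoc, this, cs.alt_aux' i i']

theorem ris_alt_periodic (i i' : B) (k : ℕ) (hk : k < M i i') :
    (cs.rightInvSeq (alternatingWord i i' (2 * M i i'))).getD k 1
      = (cs.rightInvSeq (alternatingWord i i' (2 * M i i'))).getD (k + M i i') 1 := by
  set m := M i i'
  rw [cs.ris_alternatingWord i i' m k (by omega), cs.ris_alternatingWord i i' m (k + m) (by omega)]
  have h1 : 2*m - k - 1 = (m - k - 1) + m := by omega
  have h2 : 2*m - (k + m) - 1 = m - k - 1 := by omega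
  rw [h1, h2, pow_add, cs.simple_mul_simple_pow, mul_one]

/-! ### The count-parity function -/

open Classical in
/-- Indicator-sum count of `t` in `l`, valued in `ZMod 2`. -/
noncomputable def countZ (t : W) (l : List W) : ZMod 2 :=
  (l.map (fun x => if x = t then (1 : ZMod 2) else 0)).sum

open Classical in
theorem countZ_nil (t : W) : countZ t ([] : List W) = 0 := rfl

open Classical in
theorem countZ_cons (t a : W) (l : List W) :
    countZ t (a :: l) = (if a = t then (1:ZMod 2) else 0) + countZ t l := by
  simp [countZ]

open Classical in
theorem countZ_append (t : W) (l₁ l₂ : List W) :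
    countZ t (l₁ ++ l₂) = countZ t l₁ + countZ t l₂ := by
  simp [countZ]

theorem countZ_eq_zero_of_not_mem {t : W} {l : List W} (h : t ∉ l) : countZ t l = 0 := by
  induction l with
  | nil => rfl
  | cons a l ih =>
    rw [countZ_cons, if_neg (fun hh => h (by rw [← hh]; exact mem_cons_self)), zero_add]
    exact ih (fun hh => h (mem_cons_of_mem a hh))

theorem countZ_ris_alt (i i' : B) (t : W) :
    countZ t (cs.rightInvSeq (alternatingWord i i' (2 * M i i'))) = 0 := by
  set m := M i i' with hm
  set R := cs.rightInvSeq (alternatingWord i i' (2*m)) with hR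
  have hlen : R.length = 2*m := by
    rw [hR, length_rightInvSeq, length_alternatingWord]
  have heq : R.take m = R.drop m := by
    apply List.ext_getElem
    · simp [hlen]; omega
    · intro n h1 h2
      rw [getElem_take, getElem_drop]
      have hn : n < m := by simp [hlen] at h1; omega
      rw [← getD_eq_getElem R 1 (by omega), ← getD_eq_getElem R 1 (by rw [hlen]; omega)]
      have := cs.ris_alt_periodic i i' n hn
      rw [← hm, ← hR] at this
      rw [Nat.add_comm m n]
      exact this
  have hsplit : R = R.take m ++ R.take m := by
    conv_lhs => rw [← take_append_drop m R]
    rw [← heq]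
  rw [hsplit, countZ_append]
  exact CharTwo.add_self_eq_zero _

end CoxeterSystem

end BruhatDevelopment
section BruhatDevelopment2

open List

namespace CoxeterSystem

variable (cs : CoxeterSystem M W)
local prefix:100 "ℓ" => cs.length
local prefix:100 "π" => cs.wordProd
local prefix:100 "σ" => cs.simple

theorem simple_conj_eq_iff (i : B) (t : W) : σ i * t * σ i = σ i ↔ t = σ i := by
  constructor
  · intro h
    have h' : σ i * t * σ i = σ i * σ i * σ i := by
      rw [cs.simple_mul_simple_self, one_mul, h]
    exact mul_left_cancel (mul_right_cancel h')
  · rintro rfl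
    rw [cs.simple_mul_simple_self, one_mul]

open Classical in
/-- The action of a generator on `W × ZMod 2` (reflection–parity representation). -/
noncomputable def eta (i : B) : Equiv.Perm (W × ZMod 2) :=
  Function.Involutive.toPerm
    (fun p => (σ i * p.1 * σ i, p.2 + if p.1 = σ i then 1 else 0)) (by
      rintro ⟨t, ε⟩
      simp only [Prod.mk.injEq]
      constructor
      · simp [mul_assoc, cs.simple_mul_simple_self, cs.simple_mul_simple_cancel_left]
      · by_cases h : t = σ i
        · subst h
          rw [if_pos rfl, if_pos ((cs.simple_conj_eq_iff i _).mpr rfl), add_assoc]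
          norm_num
          decide
        · rw [if_neg h, if_neg (fun hh => h ((cs.simple_conj_eq_iff i t).mp hh)), add_zero,
            add_zero])

open Classical in
theorem eta_apply (i : B) (t : W) (ε : ZMod 2) :
    cs.eta i (t, ε) = (σ i * t * σ i, ε + if t = σ i then 1 else 0) := rfl

open Classical in
theorem eta_prod_apply (ω : List B) (t : W) (ε : ZMod 2) :
    ((ω.map cs.eta).prod) (t, ε)
      = (π ω * t * (π ω)⁻¹, ε + countZ t (cs.rightInvSeq ω)) := by
  induction ω generalizing t ε with
  | nil => simp [countZ_nil]
  | cons i ω ih =>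
    rw [map_cons, prod_cons, Equiv.Perm.mul_apply, ih, eta_apply]
    have hris : cs.rightInvSeq (i :: ω) = ((π ω)⁻¹ * σ i * π ω) :: cs.rightInvSeq ω := rfl
    have hiff : (π ω * t * (π ω)⁻¹ = σ i) ↔ ((π ω)⁻¹ * σ i * π ω = t) := by
      constructor <;> intro h <;> rw [← h] <;> group
    simp only [Prod.mk.injEq]
    constructor
    · rw [wordProd_cons, mul_inv_rev, cs.inv_simple]
      group
    · rw [hris, countZ_cons]
      by_cases h : (π ω)⁻¹ * σ i * π ω = t
      · rw [if_pos h, if_pos (hiff.mpr h)]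
        ring
      · rw [if_neg h, if_neg (fun hh => h (hiff.mp hh)), add_zero, zero_add]

theorem eta_pow_eq_prod (i i' : B) (m : ℕ) :
    (cs.eta i * cs.eta i') ^ m = ((alternatingWord i i' (2*m)).map cs.eta).prod := by
  induction m with
  | zero => simp [alternatingWord]
  | succ m ih =>
    have h2 : 2*(m+1) = (2*m+1)+1 := by omega
    have ha : alternatingWord i i' (2*(m+1)) = i :: i' :: alternatingWord i i' (2*m) := by
      rw [h2, alternatingWord_succ', alternatingWord_succ']
      simp [Nat.even_add_one, parity_simps]
    rw [ha, pow_succ', ih, map_cons, map_cons, prod_cons, prod_cons, mul_assoc]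

theorem eta_liftable : M.IsLiftable cs.eta := by
  intro i i'
  rw [cs.eta_pow_eq_prod]
  have hp : π (alternatingWord i i' (2 * M i i')) = 1 := by
    rw [prod_alternatingWord_eq_mul_pow]
    have hev : Even (2 * M i i') := ⟨M i i', by omega⟩
    rw [if_pos hev, one_mul]
    have h2 : 2 * M i i' / 2 = M i i' := by omega
    rw [h2, cs.simple_mul_simple_pow]
  apply Equiv.ext
  rintro ⟨t, ε⟩
  rw [cs.eta_prod_apply, hp, cs.countZ_ris_alt, add_zero]
  simp

/-- The reflection–parity representation of `W`. -/
noncomputable def Phi : W →* Equiv.Perm (W × ZMod 2) := cs.lift ⟨cs.eta, cs.eta_liftable⟩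

theorem Phi_wordProd (ω : List B) : cs.Phi (π ω) = ((ω.map cs.eta).prod) := by
  unfold wordProd
  rw [map_list_prod, map_map]
  congr 1
  apply List.map_congr_left
  intro a _
  show cs.Phi (σ a) = cs.eta a
  exact cs.lift_apply_simple cs.eta_liftable a

/-- The parity cocycle. -/
noncomputable def P (w t : W) : ZMod 2 := (cs.Phi w (t, 0)).2

theorem Phi_apply (w t : W) (ε : ZMod 2) : cs.Phi w (t, ε) = (w * t * w⁻¹, ε + cs.P w t) := by
  obtain ⟨ω, rfl⟩ := cs.wordProd_surjective w
  unfold P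
  rw [Phi_wordProd, eta_prod_apply, eta_prod_apply, zero_add]

theorem P_wordProd (ω : List B) (t : W) : cs.P (π ω) t = countZ t (cs.rightInvSeq ω) := by
  unfold P
  rw [Phi_wordProd, eta_prod_apply, zero_add]

theorem P_mul (u v t : W) : cs.P (u * v) t = cs.P v t + cs.P u (v * t * v⁻¹) := by
  have h : cs.Phi (u * v) (t, 0) = cs.Phi u (cs.Phi v (t, 0)) := by
    rw [map_mul, Equiv.Perm.mul_apply]
  rw [Phi_apply, Phi_apply, Phi_apply] at h
  simp only [Prod.mk.injEq] at h
  obtain ⟨-, h2⟩ := h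
  simpa using h2

theorem P_one (t : W) : cs.P 1 t = 0 := by
  unfold P
  rw [map_one]
  rfl

open Classical in
theorem P_simple_self (i : B) : cs.P (σ i) (σ i) = 1 := by
  unfold P
  have h : cs.Phi (σ i) = cs.eta i := cs.lift_apply_simple cs.eta_liftable i
  rw [h, cs.eta_apply, if_pos rfl]
  simp

theorem P_refl_self {t : W} (ht : cs.IsReflection t) : cs.P t t = 1 := by
  obtain ⟨u, i, rfl⟩ := ht
  set t₀ := u * σ i * u⁻¹ with ht₀
  have e1 : cs.P t₀ t₀ = cs.P (σ i * u⁻¹) t₀ + cs.P u ((σ i * u⁻¹) * t₀ * (σ i * u⁻¹)⁻¹) := by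
    have hsplit : t₀ = u * (σ i * u⁻¹) := by rw [ht₀]; group
    nth_rw 1 [hsplit]
    rw [cs.P_mul]
  have e2 : (σ i * u⁻¹) * t₀ * (σ i * u⁻¹)⁻¹ = σ i := by
    rw [ht₀, mul_inv_rev, inv_inv, cs.inv_simple]
    simp [mul_assoc, cs.simple_mul_simple_cancel_left]
  have e3 : cs.P (σ i * u⁻¹) t₀ = cs.P u⁻¹ t₀ + cs.P (σ i) (u⁻¹ * t₀ * u⁻¹⁻¹) := cs.P_mul _ _ _
  have e4 : u⁻¹ * t₀ * u⁻¹⁻¹ = σ i := by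
    rw [ht₀]
    group
  have e5 : cs.P u⁻¹ t₀ + cs.P u (u⁻¹ * t₀ * u⁻¹⁻¹) = 0 := by
    rw [← cs.P_mul, mul_inv_cancel, cs.P_one]
  rw [e4] at e3 e5
  rw [e1, e2, e3, cs.P_simple_self]
  linear_combination e5

theorem length_lt_of_P_eq_one {w t : W} (h : cs.P w t = 1) :
    ℓ (w * t) < ℓ w := by
  obtain ⟨ω, hred, rfl⟩ := cs.exists_reduced_word' w
  rw [cs.P_wordProd] at h
  have hmem : t ∈ cs.rightInvSeq ω := by
    by_contra hmem
    rw [countZ_eq_zero_of_not_mem hmem] at h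
    exact absurd h (by decide)
  exact (cs.isRightInversion_of_mem_rightInvSeq hred hmem).2

theorem P_eq_one_of_length_lt {w t : W} (ht : cs.IsReflection t) (h : ℓ (w * t) < ℓ w) :
    cs.P w t = 1 := by
  have hv : ∀ x : ZMod 2, x = 0 ∨ x = 1 := by decide
  rcases hv (cs.P w t) with h0 | h1
  · exfalso
    have hwt : cs.P (w * t) t = 1 := by
      rw [cs.P_mul]
      have htt : t * t * t⁻¹ = t := by rw [ht.mul_self, one_mul, ht.inv]
      rw [htt, cs.P_refl_self ht, h0, add_zero]
    have hlt := cs.length_lt_of_P_eq_one hwt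
    rw [mul_assoc, ht.mul_self, mul_one] at hlt
    omega
  · exact h1

/-- **Strong exchange property.** -/
theorem strong_exchange (ω : List B) {t : W} (ht : cs.IsReflection t)
    (h : ℓ (π ω * t) < ℓ (π ω)) :
    ∃ j < ω.length, π (ω.eraseIdx j) = π ω * t := by
  have hp := cs.P_eq_one_of_length_lt ht h
  rw [cs.P_wordProd] at hp
  have hmem : t ∈ cs.rightInvSeq ω := by
    by_contra hmem
    rw [countZ_eq_zero_of_not_mem hmem] at hp
    exact absurd hp (by decide)
  obtain ⟨j, hj, hjt⟩ := List.mem_iff_getElem.mp hmem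
  rw [cs.length_rightInvSeq] at hj
  refine ⟨j, hj, ?_⟩
  rw [← cs.wordProd_mul_getD_rightInvSeq ω j]
  congr 1
  rw [List.getD_eq_getElem _ 1 (by rw [cs.length_rightInvSeq]; omega), hjt]

end CoxeterSystem

end BruhatDevelopment2
section BruhatDevelopment3

open List

namespace CoxeterSystem

variable (cs : CoxeterSystem M W)
local prefix:100 "ℓ" => cs.length
local prefix:100 "π" => cs.wordProd
local prefix:100 "σ" => cs.simple

/-- **Deletion property**: every word has a reduced sublist with the same product. -/
theorem exists_reduced_sublist (ω : List B) :
    ∃ ρ : List B, ρ.Sublist ω ∧ cs.IsReduced ρ ∧ π ρ = π ω := by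
  suffices h : ∀ n (ω : List B), ω.length ≤ n →
      ∃ ρ : List B, ρ.Sublist ω ∧ cs.IsReduced ρ ∧ π ρ = π ω from h ω.length ω le_rfl
  intro n
  induction n with
  | zero =>
    intro ω hlen
    have hω : ω = [] := by
      cases ω with
      | nil => rfl
      | cons a l => simp at hlen
    subst hω
    exact ⟨[], Sublist.refl _, by simp [IsReduced], rfl⟩
  | succ n ih =>
    intro ω hlen
    by_cases hred : cs.IsReduced ω
    · exact ⟨ω, Sublist.refl _, hred, rfl⟩
    · -- find a descent position
      have hdesc : ∃ j < ω.length, ℓ (π (ω.take (j+1))) < ℓ (π (ω.take j)) := by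
        by_contra hcon
        push_neg at hcon
        have hstep : ∀ j ≤ ω.length, ℓ (π (ω.take j)) = j := by
          intro j
          induction j with
          | zero => intro _; simp
          | succ j ihj =>
            intro hj
            have hj' : j < ω.length := by omega
            have htake : ω.take (j+1) = ω.take j ++ [ω[j]] := by
              rw [take_succ, getElem?_eq_getElem hj']
              rfl
            have hπ : π (ω.take (j+1)) = π (ω.take j) * σ (ω[j]) := by
              rw [htake, wordProd_append, wordProd_singleton]
            have hge := hcon j hj'
            rcases cs.length_mul_simple (π (ω.take j)) (ω[j]) with hc | hc
            · rw [hπ, hc, ihj (by omega)]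
            · exfalso
              rw [hπ] at hge
              omega
        have := hstep ω.length le_rfl
        rw [take_length] at this
        exact hred this
      obtain ⟨j, hj, hdlt⟩ := hdesc
      have htake : ω.take (j+1) = ω.take j ++ [ω[j]] := by
        rw [take_succ, getElem?_eq_getElem hj]
        rfl
      have hπ1 : π (ω.take (j+1)) = π (ω.take j) * σ (ω[j]) := by
        rw [htake, wordProd_append, wordProd_singleton]
      rw [hπ1] at hdlt
      obtain ⟨k, hk, hke⟩ := cs.strong_exchange (ω.take j) (cs.isReflection_simple (ω[j])) hdlt
      set ω₂ := (ω.take j).eraseIdx k ++ ω.drop (j+1) with hω₂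
      have hπ2 : π ω₂ = π ω := by
        rw [hω₂, wordProd_append, hke, ← hπ1]
        conv_rhs => rw [← take_append_drop (j+1) ω]
        rw [wordProd_append]
      have hsub2 : ω₂.Sublist ω := by
        have h1 : ((ω.take j).eraseIdx k).Sublist (ω.take j) := eraseIdx_sublist _ k
        have h2 : (ω.drop (j+1)).Sublist (ω.drop j) := by
          rw [List.drop_eq_getElem_cons hj]
          exact sublist_cons_self _ _
        have h3 := Sublist.append h1 h2
        calc ω₂.Sublist (ω.take j ++ ω.drop j) := h3
          _ = ω := take_append_drop j ω
      have hlen2 : ω₂.length ≤ n := by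
        have hkl : ((ω.take j).eraseIdx k).length + 1 = (ω.take j).length :=
          length_eraseIdx_add_one hk
        have ht1 : (ω.take j).length = j := by
          rw [length_take]; omega
        have hdl : (ω.drop (j+1)).length = ω.length - (j+1) := length_drop
        rw [hω₂, length_append]
        omega
      obtain ⟨ρ, hρs, hρred, hρπ⟩ := ih ω₂ hlen2
      exact ⟨ρ, hρs.trans hsub2, hρred, by rw [hρπ, hπ2]⟩

/-- **Subword property** (one direction): if `x ≤ w` then every reduced word for `w`
has a reduced sublist which is a word for `x`. -/
theorem le_exists_reduced_sublist {x w : W} (hxw : cs.bruhatLE x w) :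
    ∀ ω : List B, cs.IsReduced ω → π ω = w →
      ∃ ρ : List B, ρ.Sublist ω ∧ cs.IsReduced ρ ∧ π ρ = x := by
  induction hxw with
  | refl => exact fun ω h hp => ⟨ω, Sublist.refl _, h, hp⟩
  | tail hxb hbc ih =>
    rename_i b c
    intro ω hred hp
    obtain ⟨hlen, t, ht, rfl⟩ := hbc
    have hb : π ω * t = b := by
      rw [hp, mul_assoc, ht.mul_self, mul_one]
    have hlt : ℓ (π ω * t) < ℓ (π ω) := by
      rw [hb, hp]
      exact hlen
    obtain ⟨j, hj, hje⟩ := cs.strong_exchange ω ht hlt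
    obtain ⟨ρ, hρsub, hρred, hρπ⟩ := cs.exists_reduced_sublist (ω.eraseIdx j)
    obtain ⟨ρ₂, hρ₂sub, hρ₂red, hρ₂π⟩ := ih ρ hρred (by rw [hρπ, hje, hb])
    exact ⟨ρ₂, (hρ₂sub.trans hρsub).trans (eraseIdx_sublist ω j), hρ₂red, hρ₂π⟩

end CoxeterSystem
end BruhatDevelopment3
section BruhatDevelopment4

open List

namespace CoxeterSystem

variable (cs : CoxeterSystem M W)
local prefix:100 "ℓ" => cs.length
local prefix:100 "π" => cs.wordProd
local prefix:100 "σ" => cs.simple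

theorem triple (n : ℕ) :
    (∀ ρ σl : List B, cs.IsReduced ρ → ρ.length ≤ n → σl.Sublist ρ →
        cs.bruhatLE (π σl) (π ρ)) ∧
    (∀ (i : B) (u w : W), ℓ w ≤ n → cs.bruhatLE u w → ℓ u < ℓ (σ i * u) →
        ℓ w < ℓ (σ i * w) → cs.bruhatLE (σ i * u) (σ i * w)) ∧
    (∀ (i : B) (u w : W), ℓ w ≤ n → cs.bruhatLE u w → ℓ u < ℓ (σ i * u) →
        ℓ (σ i * w) < ℓ w → cs.bruhatLE u (σ i * w)) := by
  induction n using Nat.strong_induction_on with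
  | _ n ih =>
  refine ⟨?_, ?_, ?_⟩
  · -- (6): subword implies ≤
    intro ρ σl hred hlen hsub
    cases ρ with
    | nil =>
      rw [sublist_nil.mp hsub]
      exact cs.bruhatLE_refl _
    | cons i ρ' =>
      have hπc : π (i :: ρ') = σ i * π ρ' := wordProd_cons cs i ρ'
      have hlc : ℓ (π (i :: ρ')) = ρ'.length + 1 := hred
      have hl' : ℓ (π ρ') = ρ'.length := by
        have h1 := cs.length_wordProd_le ρ'
        rcases cs.length_simple_mul (π ρ') i with hc | hc <;> rw [← hπc] at hc <;> omega
      have hred' : cs.IsReduced ρ' := hl'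
      have hlen' : ρ'.length + 1 ≤ n := by simpa using hlen
      have hup : ℓ (π ρ') < ℓ (σ i * π ρ') := by rw [← hπc]; omega
      have hn1 : n - 1 < n := by omega
      cases hsub with
      | cons a hsub' =>
        have h1 := (ih (n-1) hn1).1 ρ' σl hred' (by omega) hsub'
        exact h1.trans (by rw [hπc]; exact cs.le_simple_mul hup)
      | cons_cons a hsub' =>
        rename_i σl'
        have h1 := (ih (n-1) hn1).1 ρ' σl' hred' (by omega) hsub'
        rw [hπc, wordProd_cons]
        rcases cs.length_simple_mul (π σl') i with hc | hc
        · exact (ih (n-1) hn1).2.1 i (π σl') (π ρ') (by omega) h1 (by omega) hup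
        · exact (cs.simple_mul_le (by omega)).trans (h1.trans (cs.le_simple_mul hup))
  · -- (Z): lifting, both sides go up
    intro i u w hn hu hsu hsw
    rcases Relation.ReflTransGen.cases_tail hu with heq | ⟨v, huv, hstep⟩
    · rw [heq]
      exact cs.bruhatLE_refl _
    · obtain ⟨hlv, t, ht, rfl⟩ := hstep
      have hn1 : n - 1 < n := by omega
      have hnv : ℓ v ≤ n - 1 := by omega
      have hswup : ℓ (σ i * (v * t)) = ℓ (v * t) + 1 := by
        rcases cs.length_simple_mul (v * t) i with hc | hc <;> omega
      rcases cs.length_simple_mul v i with hc | hc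
      · -- σ i * v goes up
        have h1 := (ih (n-1) hn1).2.1 i u v hnv huv hsu (by omega)
        have h2 : cs.bruhatLE (σ i * v) (σ i * (v * t)) := by
          rw [← mul_assoc]
          exact cs.bruhatLE_step ht (by rw [mul_assoc, hswup]; omega)
        exact h1.trans h2
      · -- σ i * v goes down
        have h1 := (ih (n-1) hn1).2.2 i u v hnv huv hsu (by omega)
        have h2 := (ih (n-1) hn1).2.1 i u (σ i * v) (by omega) h1 hsu
          (by rw [simple_mul_simple_cancel_left]; omega)
        rw [simple_mul_simple_cancel_left] at h2
        have h3 : cs.bruhatLE v (v * t) := cs.bruhatLE_step ht hlv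
        have h4 : cs.bruhatLE (v * t) (σ i * (v * t)) := cs.le_simple_mul (by omega)
        exact (h2.trans h3).trans h4
  · -- (L): lifting property
    intro i u w hn hu hsu hsw
    obtain ⟨ρ', hρ'red, hρ'⟩ := cs.exists_reduced_word' (σ i * w)
    have hπ : π (i :: ρ') = w := by
      rw [wordProd_cons, ← hρ', simple_mul_simple_cancel_left]
    have hlρ' : ρ'.length = ℓ (σ i * w) := by rw [hρ', hρ'red]
    have hconsred : cs.IsReduced (i :: ρ') := by
      show ℓ (π (i :: ρ')) = (i :: ρ').length
      rw [hπ, length_cons, hlρ']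
      rcases cs.length_simple_mul w i with hc | hc <;> omega
    obtain ⟨σl, hsub, hσred, hσπ⟩ := cs.le_exists_reduced_sublist hu (i :: ρ') hconsred hπ
    cases hsub with
    | cons a hsub' =>
      have h1 := (ih (n-1) (by omega)).1 ρ' σl hρ'red (by omega) hsub'
      rw [hσπ, ← hρ'] at h1
      exact h1
    | cons_cons a hsub' =>
      rename_i σl'
      exfalso
      have hσπ' : σ i * u = π σl' := by
        rw [← hσπ, wordProd_cons, simple_mul_simple_cancel_left]
      have hb1 : ℓ (σ i * u) ≤ σl'.length := by
        rw [hσπ']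
        exact cs.length_wordProd_le σl'
      have hb2 : ℓ u = σl'.length + 1 := by
        rw [← hσπ]
        exact hσred
      omega

theorem bruhat_lift {i : B} {u w : W} (hu : cs.bruhatLE u w) (h1 : ℓ u < ℓ (σ i * u))
    (h2 : ℓ (σ i * w) < ℓ w) : cs.bruhatLE u (σ i * w) :=
  (cs.triple (ℓ w)).2.2 i u w le_rfl hu h1 h2

theorem bruhat_le_simple_mul_iff {i : B} {x : W} (h : ℓ x < ℓ (σ i * x)) (v : W) :
    cs.bruhatLE x (σ i * v) ↔ cs.bruhatLE x v := by
  rcases cs.length_simple_mul v i with hc | hc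
  · constructor
    · intro hx
      have := cs.bruhat_lift (w := σ i * v) hx h
        (by rw [simple_mul_simple_cancel_left]; omega)
      rwa [simple_mul_simple_cancel_left] at this
    · intro hx
      exact hx.trans (cs.le_simple_mul (by omega))
  · constructor
    · intro hx
      exact hx.trans (cs.simple_mul_le (by omega))
    · intro hx
      exact cs.bruhat_lift hx h (by omega)

end CoxeterSystem

end BruhatDevelopment4
section FinalPieces

open List

theorem delIdxs_cons_zero' {B : Type*} (b : B) (ω : List B) (S : List ℕ) (h0 : 0 ∉ S) :
    delIdxs (b :: ω) S = b :: delIdxs (b :: ω) (S ++ [0]) := by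
  unfold delIdxs
  have he : (b :: ω).zipIdx = (b, 0) :: ω.zipIdx 1 := rfl
  have c1 : (decide ((0:ℕ) ∉ S)) = true := by simpa using h0
  have c2 : (decide ((0:ℕ) ∉ S ++ [0])) = false := by simp
  rw [he, filter_cons, filter_cons, c1, c2, if_pos rfl, if_neg (by simp)]
  have hfilter : (ω.zipIdx 1).filter (fun p => decide (p.2 ∉ S ++ [0]))
      = (ω.zipIdx 1).filter (fun p => decide (p.2 ∉ S)) := by
    apply filter_congr
    rintro ⟨c, k⟩ hk
    have h1 : 1 ≤ k := (mem_zipIdx hk).1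
    have : k ≠ 0 := by omega
    simp [this]
  rw [hfilter]
  rfl

end FinalPieces
/-- Lemma A.2, first case: if the decreasing (lexicographically maximal) maximal chain label
`λ(𝒞⁻_{x,ω}) = (j_d, …, j_1)` has `j_1 = 1` (0-based: last entry `0`), then `x ≤ s_1 w`
and `λ_{x, s_1ω} = (λ_{x,ω} \ {1}) - 1`; that is, for every position `1 < t ≤ n`,
`x ≤ s_1 ⋯ ŝ_t ⋯ s_n` if and only if `x ≤ s_2 ⋯ ŝ_t ⋯ s_n`. -/
theorem dec_chain_last_zero_lambda (cs : CoxeterSystem M W) (ω : List B) (w x : W)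
    (L : List ℕ) (hωne : ω ≠ [])
    (hred : cs.IsReduced ω) (hw : cs.wordProd ω = w) (hxw : cs.bruhatLE x w)
    (hL : cs.IsMaxChainLabel ω x L) (hsort : L.Pairwise (· > ·))
    (hlexmax : ∀ L', cs.IsMaxChainLabel ω x L' → ¬ List.Lex (· < ·) L L')
    (hne : L ≠ []) (hlast : L.getLast hne = 0) :
    cs.bruhatLE x (cs.wordProd ω.tail) ∧
    ∀ t, 0 < t → t < ω.length →
      (cs.bruhatLE x (cs.wordProd (ω.eraseIdx t)) ↔
        cs.bruhatLE x (cs.wordProd (ω.tail.eraseIdx (t - 1)))) := by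
  obtain ⟨b, ω₂, rfl⟩ : ∃ b ω₂, ω = b :: ω₂ := by
    cases ω with
    | nil => exact absurd rfl hωne
    | cons b ω₂ => exact ⟨b, ω₂, rfl⟩
  obtain ⟨hnodup, hbound, hcov, hπL⟩ := hL
  have hpos : 0 < L.length := List.length_pos_iff.mpr hne
  have hLd : L.dropLast ++ [0] = L := by
    conv_rhs => rw [← List.dropLast_append_getLast hne]
    rw [hlast]
  have h0 : (0:ℕ) ∉ L.dropLast := by
    have hp : List.Pairwise (· > ·) (L.dropLast ++ [0]) := by rw [hLd]; exact hsort
    rw [List.pairwise_append] at hp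
    intro hmem
    have := hp.2.2 0 hmem 0 (by simp)
    omega
  have hkey : delIdxs (b :: ω₂) L.dropLast = b :: delIdxs (b :: ω₂) L := by
    have h := delIdxs_cons_zero' b ω₂ L.dropLast h0
    rwa [hLd] at h
  -- the last step of the chain shows `ℓ (σ b * x) = ℓ x + 1`
  have hcov1 := hcov (L.length - 1) (by omega)
  rw [show L.length - 1 + 1 = L.length from by omega, List.take_length,
    ← List.dropLast_eq_take, hπL, hkey, cs.wordProd_cons, hπL] at hcov1
  have hsx : cs.length (cs.simple b * x) = cs.length x + 1 := hcov1.2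
  have hx : cs.length x < cs.length (cs.simple b * x) := by omega
  have hw2 : cs.simple b * w = cs.wordProd ω₂ := by
    rw [← hw, cs.wordProd_cons, cs.simple_mul_simple_cancel_left]
  have hlw : cs.length (cs.simple b * w) < cs.length w := by
    have h1 := cs.length_wordProd_le ω₂
    have h2 : cs.length w = ω₂.length + 1 := by
      rw [← hw]
      exact hred
    rw [hw2]
    omega
  constructor
  · have h := cs.bruhat_lift hxw hx hlw
    rwa [hw2] at h
  · intro t ht0 htlen
    obtain ⟨t', rfl⟩ : ∃ t', t = t' + 1 := ⟨t - 1, by omega⟩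
    have herase : (b :: ω₂).eraseIdx (t' + 1) = b :: ω₂.eraseIdx t' := rfl
    have htail : (b :: ω₂).tail = ω₂ := rfl
    rw [herase, htail, cs.wordProd_cons, show t' + 1 - 1 = t' from by omega]
    exact cs.bruhat_le_simple_mul_iff hx (cs.wordProd (ω₂.eraseIdx t'))
end
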